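/- arXiv:2102.00314 — 6 statements merged into one kernel-verified Lean document; each statement's English description precedes it below -/
import Mathlib

section
/- For every ψ : {0,1}^d → {0,1}, the function f_ψ is 1-Lipschitz on [0,1]^d (with respect to the Euclidean metric), takes values in [0, 1/4] (in particular in [0,1]), and satisfies f_ψ(x) = ψ(z)/4 for every z ∈ {0,1}^d and every x ∈ A_z. -/
open MeasureTheory

noncomputable section

/-- Boolean bit as a real number. -/
def bR (b : Bool) : ℝ := if b then 1 else 0

/-- The unit cube `[0,1]^d` inside Euclidean space. -/
def cube (d : ℕ) : Set (EuclideanSpace ℝ (Fin d)) := {x | ∀ i, x i ∈ Set.Icc (0:ℝ) 1}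

/-- `A_z = {x ∈ [0,1]^d : |x_i − z_i| ≤ 1/4 for all i}`. -/
def Az {d : ℕ} (z : Fin d → Bool) : Set (EuclideanSpace ℝ (Fin d)) :=
  {x | ∀ i, x i ∈ Set.Icc (0:ℝ) 1 ∧ |x i - bR (z i)| ≤ 1/4}

/-- `h_z(x) = max(0, 1/4 − dist(x, A_z))`, Euclidean distance to the set `A_z`. -/
def hzf {d : ℕ} (z : Fin d → Bool) (x : EuclideanSpace ℝ (Fin d)) : ℝ :=
  max 0 (1/4 - Metric.infDist x (Az z))

/-- `f_ψ(x) = Σ_{z ∈ {0,1}^d} ψ(z) · h_z(x)`. -/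
def fpsi {d : ℕ} (ψ : (Fin d → Bool) → Bool) (x : EuclideanSpace ℝ (Fin d)) : ℝ :=
  ∑ z : Fin d → Bool, bR (ψ z) * hzf z x

lemma bR_mem (b : Bool) : bR b ∈ Set.Icc (0:ℝ) 1 := by cases b <;> simp [bR]

lemma Az_nonempty {d : ℕ} (z : Fin d → Bool) : (Az z).Nonempty := by
  refine ⟨WithLp.toLp 2 (fun i => bR (z i) : Fin d → ℝ), fun i => ⟨bR_mem _, by simp⟩⟩

lemma coord_le_dist {d : ℕ} (x y : EuclideanSpace ℝ (Fin d)) (i : Fin d) :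
    |x i - y i| ≤ dist x y := by
  rw [EuclideanSpace.dist_eq]
  have : |x i - y i| = Real.sqrt ((x i - y i)^2) := (Real.sqrt_sq_eq_abs _).symm
  rw [this]
  apply Real.sqrt_le_sqrt
  have := Finset.single_le_sum (f := fun j => dist (x j) (y j)^2)
    (fun j _ => sq_nonneg _) (Finset.mem_univ i)
  simpa [Real.dist_eq, sq_abs] using this

lemma sep {d : ℕ} {z z' : Fin d → Bool} (h : z ≠ z')
    {y w : EuclideanSpace ℝ (Fin d)} (hy : y ∈ Az z) (hw : w ∈ Az z') :
    1/2 ≤ dist y w := by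
  obtain ⟨i, hi⟩ := Function.ne_iff.mp h
  have h1 : |y i - bR (z i)| ≤ 1/4 := (hy i).2
  have h2 : |w i - bR (z' i)| ≤ 1/4 := (hw i).2
  have hb : |bR (z i) - bR (z' i)| = 1 := by
    cases hzi : z i <;> cases hzi' : z' i <;> simp_all [bR]
  have : (1:ℝ) ≤ |y i - bR (z i)| + |y i - w i| + |w i - bR (z' i)| := by
    have t1 := abs_sub_le (bR (z i)) (y i) (bR (z' i))
    have t2 := abs_sub_le (y i) (w i) (bR (z' i))
    rw [abs_sub_comm (bR (z i)) (y i)] at t1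
    linarith [hb.ge]
  have : 1/2 ≤ |y i - w i| := by linarith
  exact this.trans (coord_le_dist y w i)

lemma hzf_nonneg {d : ℕ} (z : Fin d → Bool) (x : EuclideanSpace ℝ (Fin d)) :
    0 ≤ hzf z x := le_max_left _ _

lemma hzf_le {d : ℕ} (z : Fin d → Bool) (x : EuclideanSpace ℝ (Fin d)) :
    hzf z x ≤ 1/4 := by
  have := Metric.infDist_nonneg (s := Az z) (x := x)
  simp only [hzf, max_le_iff]
  constructor <;> linarith

lemma hzf_pos_infDist {d : ℕ} {z : Fin d → Bool} {x : EuclideanSpace ℝ (Fin d)}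
    (h : hzf z x ≠ 0) : Metric.infDist x (Az z) < 1/4 := by
  by_contra hc
  push_neg at hc
  simp only [hzf] at h
  have : (1:ℝ)/4 - Metric.infDist x (Az z) ≤ 0 := by linarith
  exact h (max_eq_left this)

lemma hzf_disjoint {d : ℕ} {z z' : Fin d → Bool} (hne : z ≠ z')
    {x : EuclideanSpace ℝ (Fin d)} (h : hzf z x ≠ 0) : hzf z' x = 0 := by
  have h1 : Metric.infDist x (Az z) < 1/4 := hzf_pos_infDist h
  obtain ⟨y, hy, hdy⟩ := (Metric.infDist_lt_iff (Az_nonempty z)).mp h1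
  have hle : (1:ℝ)/4 ≤ Metric.infDist x (Az z') := by
    by_contra hc
    push_neg at hc
    obtain ⟨w, hw, hdw⟩ := (Metric.infDist_lt_iff (Az_nonempty z')).mp hc
    have := sep hne hy hw
    have htri := dist_triangle y x w
    rw [dist_comm y x] at htri
    linarith
  simp only [hzf]
  exact max_eq_left (by linarith)

lemma fpsi_exists_rep {d : ℕ} (ψ : (Fin d → Bool) → Bool)
    (x : EuclideanSpace ℝ (Fin d)) :
    ∃ z : Fin d → Bool, fpsi ψ x = bR (ψ z) * hzf z x := by
  by_cases h : ∃ z, hzf z x ≠ 0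
  · obtain ⟨z, hz⟩ := h
    refine ⟨z, Finset.sum_eq_single z (fun z' _ hz' => ?_) (by simp)⟩
    rw [hzf_disjoint hz'.symm hz]
    ring
  · push_neg at h
    refine ⟨Classical.arbitrary _, ?_⟩
    simp [fpsi, h]

lemma hzf_lip {d : ℕ} (z : Fin d → Bool) (x y : EuclideanSpace ℝ (Fin d)) :
    hzf z x - hzf z y ≤ dist x y := by
  have h1 := Metric.infDist_le_infDist_add_dist (x := y) (y := x) (s := Az z)
  rw [dist_comm y x] at h1
  have h2 : hzf z x ≤ hzf z y + dist x y := by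
    simp only [hzf]
    rcases le_or_gt (1/4 - Metric.infDist x (Az z)) 0 with hc | hc
    · rw [max_eq_left hc]
      have := dist_nonneg (x := x) (y := y)
      have := le_max_left (0:ℝ) (1/4 - Metric.infDist y (Az z))
      linarith
    · rw [max_eq_right hc.le]
      have := le_max_right (0:ℝ) (1/4 - Metric.infDist y (Az z))
      linarith
  linarith

lemma fpsi_sub_le {d : ℕ} (ψ : (Fin d → Bool) → Bool)
    (x y : EuclideanSpace ℝ (Fin d)) : fpsi ψ x - fpsi ψ y ≤ dist x y := by
  obtain ⟨z, hz⟩ := fpsi_exists_rep ψ x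
  have hy : bR (ψ z) * hzf z y ≤ fpsi ψ y := by
    apply Finset.single_le_sum (f := fun z' => bR (ψ z') * hzf z' y)
      (fun z' _ => mul_nonneg (bR_mem _).1 (hzf_nonneg _ _)) (Finset.mem_univ z)
  have hlip := hzf_lip z x y
  have hb1 : bR (ψ z) ≤ 1 := (bR_mem _).2
  have hb0 : 0 ≤ bR (ψ z) := (bR_mem _).1
  have hd := dist_nonneg (x := x) (y := y)
  rw [hz]
  nlinarith [hzf_nonneg z x, hzf_nonneg z y]

/-- for every `ψ : {0,1}^d → {0,1}`, the function `f_ψ` is `1`-Lipschitz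
on `[0,1]^d` (w.r.t. the Euclidean metric), takes values in `[0, 1/4]`, and satisfies
`f_ψ(x) = ψ(z)/4` for every `z ∈ {0,1}^d` and every `x ∈ A_z`. -/
theorem fpsi_lipschitz_range_and_value (d : ℕ) (ψ : (Fin d → Bool) → Bool) :
    LipschitzOnWith 1 (fpsi ψ) (cube d) ∧
    (∀ x ∈ cube d, fpsi ψ x ∈ Set.Icc (0:ℝ) (1/4)) ∧
    (∀ z : Fin d → Bool, ∀ x ∈ Az z, fpsi ψ x = bR (ψ z) / 4) := by
  refine ⟨?_, ?_, ?_⟩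
  · have hlip : LipschitzWith 1 (fpsi ψ) := by
      apply LipschitzWith.of_dist_le_mul
      intro x y
      rw [Real.dist_eq, NNReal.coe_one, one_mul, abs_sub_le_iff]
      exact ⟨fpsi_sub_le ψ x y, by rw [dist_comm]; exact fpsi_sub_le ψ y x⟩
    exact fun a _ b _ => hlip a b
  · intro x _
    obtain ⟨z, hz⟩ := fpsi_exists_rep ψ x
    rw [hz]
    constructor
    · exact mul_nonneg (bR_mem _).1 (hzf_nonneg _ _)
    · calc bR (ψ z) * hzf z x ≤ 1 * (1/4) :=
            mul_le_mul (bR_mem _).2 (hzf_le _ _) (hzf_nonneg _ _) zero_le_one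
      _ = 1/4 := one_mul _
  · intro z x hx
    have h0 : Metric.infDist x (Az z) = 0 := Metric.infDist_zero_of_mem hx
    have hzx : hzf z x = 1/4 := by
      simp [hzf, h0]
    have : fpsi ψ x = bR (ψ z) * hzf z x := by
      refine Finset.sum_eq_single z (fun z' _ hz' => ?_) (by simp)
      have hz'0 : hzf z' x = 0 := by
        have hle : (1:ℝ)/4 ≤ Metric.infDist x (Az z') := by
          by_contra hc
          push_neg at hc
          obtain ⟨w, hw, hdw⟩ := (Metric.infDist_lt_iff (Az_nonempty z')).mp hc
          have := sep hz'.symm hx hw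
          linarith
        simp only [hzf]
        exact max_eq_left (by linarith)
      rw [hz'0]; ring
    rw [this, hzx]; ring

end
end

section
/- For all ψ, ψ' : {0,1}^d → {0,1}, one has ‖f_ψ − f_{ψ'}‖²_{L2(μ)} = (1/16)·2^{−d}·|{z ∈ {0,1}^d : ψ(z) ≠ ψ'(z)}|. -/
open MeasureTheory
open scoped ENNReal

noncomputable section

/-- The set `([0,1/4] ∪ [3/4,1])^d`. -/
def Sd (d : ℕ) : Set (EuclideanSpace ℝ (Fin d)) :=
  {x | ∀ i, x i ∈ Set.Icc (0:ℝ) (1/4) ∪ Set.Icc (3/4) 1}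

/-- The uniform probability distribution on `([0,1/4] ∪ [3/4,1])^d`
(Lebesgue measure restricted to this set, normalized by its volume `2^{-d}`). -/
def muU (d : ℕ) : Measure (EuclideanSpace ℝ (Fin d)) :=
  (2:ℝ≥0∞) ^ d • volume.restrict (Sd d)

namespace FpsiAux

variable {d : ℕ}

/-- Left endpoint of the interval for bit `b`. -/
def aR (b : Bool) : ℝ := if b then 3/4 else 0

/-- `A_z` as a box in the plain pi type. -/
def Bz (z : Fin d → Bool) : Set (Fin d → ℝ) :=
  Set.univ.pi fun i => Set.Icc (aR (z i)) (aR (z i) + 1/4)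

lemma mem_Az {z : Fin d → Bool} {x : EuclideanSpace ℝ (Fin d)} :
    x ∈ Az z ↔ ∀ i, x i ∈ Set.Icc (aR (z i)) (aR (z i) + 1/4) := by
  constructor
  · intro h i
    obtain ⟨h1, h2⟩ := h i
    rw [abs_le] at h2
    cases hb : z i <;> simp [aR, bR, hb, Set.mem_Icc] at * <;>
      constructor <;> linarith [h1.1, h1.2, h2.1, h2.2]
  · intro h i
    have hi := h i
    rw [Set.mem_Icc] at hi
    cases hb : z i <;> simp [aR, bR, hb, abs_le, Set.mem_Icc] at * <;>
      refine ⟨⟨?_, ?_⟩, ?_, ?_⟩ <;> linarith [(h i).1, (h i).2, hi.1, hi.2]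

lemma Az_eq_preimage (z : Fin d → Bool) :
    Az z = (MeasurableEquiv.toLp 2 (Fin d → ℝ)).symm ⁻¹' (Bz z) := by
  ext x
  rw [Set.mem_preimage, Bz, Set.mem_univ_pi]
  exact mem_Az

lemma measurableSet_Bz (z : Fin d → Bool) : MeasurableSet (Bz z) :=
  MeasurableSet.univ_pi fun _ => measurableSet_Icc

lemma measurableSet_Az (z : Fin d → Bool) : MeasurableSet (Az z) := by
  rw [Az_eq_preimage]
  exact (MeasurableEquiv.toLp 2 (Fin d → ℝ)).symm.measurable (measurableSet_Bz z)

lemma volume_Az (z : Fin d → Bool) :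
    volume (Az z) = ENNReal.ofReal (1/4) ^ d := by
  rw [Az_eq_preimage]
  rw [(EuclideanSpace.volume_preserving_symm_measurableEquiv_toLp (Fin d)).measure_preimage
    (measurableSet_Bz z).nullMeasurableSet]
  rw [Bz, volume_pi_pi]
  simp [Real.volume_Icc]

lemma measurableSet_Sd : MeasurableSet (Sd d) := by
  have : Sd d = (MeasurableEquiv.toLp 2 (Fin d → ℝ)).symm ⁻¹'
      (Set.univ.pi fun _ : Fin d => Set.Icc (0:ℝ) (1/4) ∪ Set.Icc (3/4) 1) := by
    ext x; simp [Sd, Set.mem_pi]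
  rw [this]
  exact (MeasurableEquiv.toLp 2 (Fin d → ℝ)).symm.measurable
    (MeasurableSet.univ_pi fun _ => (measurableSet_Icc.union measurableSet_Icc))

lemma Az_nonempty (z : Fin d → Bool) : (Az z).Nonempty := by
  refine ⟨WithLp.toLp 2 (fun i => aR (z i) : Fin d → ℝ), ?_⟩
  rw [mem_Az]
  intro i
  constructor <;> [exact le_refl _; exact le_add_of_nonneg_right (by norm_num)]

lemma Az_subset_Sd (z : Fin d → Bool) : Az z ⊆ Sd d := by
  intro x hx i
  have := (mem_Az.1 hx) i
  rw [Set.mem_Icc] at this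
  cases hb : z i
  · left; rw [Set.mem_Icc]; simp [aR, hb] at this
    exact ⟨this.1, by linarith [this.2]⟩
  · right; rw [Set.mem_Icc]; simp [aR, hb] at this
    exact ⟨this.1, by linarith [this.2]⟩

/-- The bit vector of a point. -/
def zOf (x : EuclideanSpace ℝ (Fin d)) : Fin d → Bool := fun i => decide ((3:ℝ)/4 ≤ x i)

lemma mem_Az_zOf {x : EuclideanSpace ℝ (Fin d)} (hx : x ∈ Sd d) : x ∈ Az (zOf x) := by
  rw [mem_Az]
  intro i
  rcases hx i with h | h <;> rw [Set.mem_Icc] at h <;> rw [Set.mem_Icc]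
  · have hz : zOf x i = false := by simp [zOf]; linarith [h.2]
    rw [hz]
    constructor <;> simp [aR] <;> linarith [h.1, h.2]
  · have hz : zOf x i = true := by simp [zOf]; linarith [h.1]
    rw [hz]
    constructor <;> simp [aR] <;> linarith [h.1, h.2]

lemma eq_zOf_of_mem {x : EuclideanSpace ℝ (Fin d)} {z : Fin d → Bool}
    (h : x ∈ Az z) : z = zOf x := by
  funext i
  have hi := (mem_Az.1 h) i
  rw [Set.mem_Icc] at hi
  cases hb : z i <;> simp [aR, hb] at hi <;> simp [zOf] <;> linarith [hi.1, hi.2]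

lemma coord_dist_le (x y : EuclideanSpace ℝ (Fin d)) (i : Fin d) :
    |x i - y i| ≤ dist x y := by
  rw [EuclideanSpace.dist_eq]
  have h1 : |x i - y i| = Real.sqrt (dist (x i) (y i) ^ 2) := by
    rw [Real.sqrt_sq dist_nonneg, Real.dist_eq]
  rw [h1]
  apply Real.sqrt_le_sqrt
  exact Finset.single_le_sum (f := fun j => dist (x j) (y j) ^ 2)
    (fun j _ => sq_nonneg _) (Finset.mem_univ i)

lemma hzf_of_mem {x : EuclideanSpace ℝ (Fin d)} {z : Fin d → Bool}
    (h : x ∈ Az z) : hzf z x = 1/4 := by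
  rw [hzf, Metric.infDist_zero_of_mem h]
  norm_num

lemma hzf_of_not_mem {x : EuclideanSpace ℝ (Fin d)} {z : Fin d → Bool}
    (hx : x ∈ Sd d) (h : x ∉ Az z) : hzf z x = 0 := by
  -- find a mismatched coordinate
  have hmem : x ∈ Az (zOf x) := mem_Az_zOf hx
  have hne : z ≠ zOf x := fun he => h (he ▸ hmem)
  obtain ⟨i, hi⟩ : ∃ i, z i ≠ zOf x i := by
    by_contra hc
    push_neg at hc
    exact hne (funext hc)
  have hxi := (mem_Az.1 hmem) i
  rw [Set.mem_Icc] at hxi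
  have key : ∀ y ∈ Az z, (1:ℝ)/4 ≤ dist x y := by
    intro y hy
    have hyi := (mem_Az.1 hy) i
    rw [Set.mem_Icc] at hyi
    refine le_trans ?_ (coord_dist_le x y i)
    rw [le_abs]
    cases hb : z i
    · have hz' : zOf x i = true := by
        cases h' : zOf x i
        · exact absurd (hb.trans h'.symm) hi
        · rfl
      rw [hb] at hyi; rw [hz'] at hxi
      simp [aR] at hxi hyi
      left; linarith [hxi.1, hyi.2]
    · have hz' : zOf x i = false := by
        cases h' : zOf x i
        · rfl
        · exact absurd (hb.trans h'.symm) hi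
      rw [hb] at hyi; rw [hz'] at hxi
      simp [aR] at hxi hyi
      right; linarith [hxi.2, hyi.1]
  have hinf : (1:ℝ)/4 ≤ Metric.infDist x (Az z) := by
    by_contra hlt
    push_neg at hlt
    obtain ⟨y, hy, hd⟩ := (Metric.infDist_lt_iff (Az_nonempty z)).1 hlt
    exact absurd hd (not_lt.2 (key y hy))
  rw [hzf]
  have : 1/4 - Metric.infDist x (Az z) ≤ 0 := by linarith
  exact max_eq_left this

lemma fpsi_on_Sd (ψ : (Fin d → Bool) → Bool) {x : EuclideanSpace ℝ (Fin d)}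
    (hx : x ∈ Sd d) : fpsi ψ x = bR (ψ (zOf x)) * (1/4) := by
  rw [fpsi]
  rw [Finset.sum_eq_single (zOf x)]
  · rw [hzf_of_mem (mem_Az_zOf hx)]
  · intro z _ hz
    rw [hzf_of_not_mem hx (fun hm => hz (eq_zOf_of_mem hm))]
    ring
  · intro h; exact absurd (Finset.mem_univ _) h

end FpsiAux

open FpsiAux

/-- for all `ψ, ψ' : {0,1}^d → {0,1}`,
`‖f_ψ − f_{ψ'}‖²_{L2(μ)} = (1/16)·2^{−d}·|{z : ψ(z) ≠ ψ'(z)}|`. -/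
theorem fpsi_L2_dist_sq (d : ℕ) (ψ ψ' : (Fin d → Bool) → Bool) :
    ∫ x, (fpsi ψ x - fpsi ψ' x) ^ 2 ∂(muU d)
      = (1/16) * (1/2^d) *
        ((Finset.univ.filter (fun z : Fin d → Bool => ψ z ≠ ψ' z)).card : ℝ) := by
  classical
  set c : (Fin d → Bool) → ℝ := fun z => if ψ z ≠ ψ' z then (1:ℝ)/16 else 0 with hc
  have key : ∀ x ∈ Sd d, (fpsi ψ x - fpsi ψ' x) ^ 2
      = ∑ z : Fin d → Bool, (Az z).indicator (fun _ => c z) x := by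
    intro x hx
    rw [fpsi_on_Sd ψ hx, fpsi_on_Sd ψ' hx]
    rw [Finset.sum_eq_single (zOf x)]
    · rw [Set.indicator_of_mem (mem_Az_zOf hx)]
      by_cases h : ψ (zOf x) = ψ' (zOf x)
      · simp [hc, h]
      · have : (bR (ψ (zOf x)) - bR (ψ' (zOf x))) ^ 2 = 1 := by
          cases hb : ψ (zOf x) <;> cases hb' : ψ' (zOf x) <;>
            simp [hb, hb'] at h ⊢ <;> simp [bR] <;> norm_num
        have e1 : bR (ψ (zOf x)) * (1/4) - bR (ψ' (zOf x)) * (1/4)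
            = (bR (ψ (zOf x)) - bR (ψ' (zOf x))) * (1/4) := by ring
        rw [e1, mul_pow, this, hc]
        simp [h]
        norm_num
    · intro z _ hz
      exact Set.indicator_of_notMem (fun hm => hz (eq_zOf_of_mem hm)) _
    · intro h; exact absurd (Finset.mem_univ _) h
  rw [muU, integral_smul_measure]
  rw [setIntegral_congr_fun measurableSet_Sd key]
  rw [integral_finset_sum]
  · have step : ∀ z : Fin d → Bool,
        ∫ x in Sd d, (Az z).indicator (fun _ => c z) x = ((1:ℝ)/4)^d * c z := by
      intro z
      rw [setIntegral_indicator (measurableSet_Az z)]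
      rw [Set.inter_eq_right.2 (Az_subset_Sd z)]
      rw [setIntegral_const, Measure.real, volume_Az]
      rw [smul_eq_mul]
      congr 1
      rw [ENNReal.toReal_pow, ENNReal.toReal_ofReal (by norm_num)]
    simp_rw [step]
    rw [← Finset.mul_sum]
    have csum : ∑ z : Fin d → Bool, c z
        = ((Finset.univ.filter (fun z : Fin d → Bool => ψ z ≠ ψ' z)).card : ℝ) * (1/16) := by
      rw [hc]
      rw [Finset.sum_ite, Finset.sum_const, Finset.sum_const_zero, add_zero]
      simp [mul_comm]
    rw [csum]
    rw [smul_eq_mul]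
    rw [ENNReal.toReal_pow, ENNReal.toReal_ofNat]
    have h4 : (2:ℝ)^d * (1/4)^d = 1/2^d := by
      have h5 : ((2:ℝ) * (1/4)) ^ d = ((1:ℝ)/2)^d := by norm_num
      rw [← mul_pow, h5, div_pow, one_pow]
    linear_combination
      (((Finset.univ.filter (fun z : Fin d → Bool => ψ z ≠ ψ' z)).card : ℝ) * (1/16)) * h4
  · intro z _
    rw [integrable_indicator_iff (measurableSet_Az z)]
    refine integrableOn_const ?_
    apply LT.lt.ne
    calc (volume.restrict (Sd d)) (Az z) ≤ volume (Az z) := Measure.restrict_le_self _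
      _ = ENNReal.ofReal (1/4) ^ d := volume_Az z
      _ < ⊤ := by
          apply ENNReal.pow_lt_top
          exact ENNReal.ofReal_lt_top

end
end

section
/- Let T be a threshold circuit with d inputs, q outputs, depth m and size s. Then there exists a ReLU network N : ℝ^d → ℝ^q of depth m+1 and size 2s+q such that N(x) = T(x) for every x ∈ {0,1}^d, and moreover N(x) ∈ [0,1]^q for every x ∈ ℝ^d. -/
noncomputable section

/-- The ReLU activation. -/
def relu (t : ℝ) : ℝ := max 0 t

/-- A feedforward neural network from `ℝ^n` to `ℝ^q`, given as a sequence of affine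
layers; the activation is applied coordinatewise after every affine layer except the
last one. -/
inductive Net : ℕ → ℕ → Type where
  | last {n q : ℕ} (A : Fin q → Fin n → ℝ) (b : Fin q → ℝ) : Net n q
  | layer {n m q : ℕ} (A : Fin m → Fin n → ℝ) (b : Fin m → ℝ) (rest : Net m q) : Net n q

/-- Evaluation of a network with activation `σ`. -/
def Net.eval (σ : ℝ → ℝ) : {n q : ℕ} → Net n q → (Fin n → ℝ) → Fin q → ℝ
  | _, _, .last A b, x, i => (∑ j, A i j * x j) + b i
  | _, _, .layer A b rest, x, i => rest.eval σ (fun m => σ ((∑ j, A m j * x j) + b m)) i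

/-- The size of a network: the total number of neurons, i.e. the sum of the output
dimensions of all affine layers. -/
def Net.size : {n q : ℕ} → Net n q → ℕ
  | _, q, .last _ _ => q
  | _, _, .layer (m := m) _ _ rest => m + rest.size

/-- The depth of a network: its number of layers. -/
def Net.depth : {n q : ℕ} → Net n q → ℕ
  | _, _, .last _ _ => 1
  | _, _, .layer _ _ rest => 1 + rest.depth

/-- `sign(t) = 1` if `t > 0` and `0` otherwise. -/
def isgn (z : ℤ) : ℤ := if 0 < z then 1 else 0

/-- A (layered) threshold circuit from `{0,1}^n` to `{0,1}^q`: every gate, including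
the output gates, computes a linear threshold function with integer weights. -/
inductive ThrCirc : ℕ → ℕ → Type where
  | last {n q : ℕ} (A : Fin q → Fin n → ℤ) (b : Fin q → ℤ) : ThrCirc n q
  | layer {n m q : ℕ} (A : Fin m → Fin n → ℤ) (b : Fin m → ℤ) (rest : ThrCirc m q) : ThrCirc n q

/-- Evaluation of a threshold circuit (the `sign` activation is applied at every gate,
including the output gates). -/
def ThrCirc.eval : {n q : ℕ} → ThrCirc n q → (Fin n → ℤ) → Fin q → ℤ
  | _, _, .last A b, x, i => isgn ((∑ j, A i j * x j) + b i)
  | _, _, .layer A b rest, x, i => rest.eval (fun m => isgn ((∑ j, A m j * x j) + b m)) i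

/-- Size of a threshold circuit: its number of gates. -/
def ThrCirc.size : {n q : ℕ} → ThrCirc n q → ℕ
  | _, q, .last _ _ => q
  | _, _, .layer (m := m) _ _ rest => m + rest.size

/-- Depth of a threshold circuit: its number of layers. -/
def ThrCirc.depth : {n q : ℕ} → ThrCirc n q → ℕ
  | _, _, .last _ _ => 1
  | _, _, .layer _ _ rest => 1 + rest.depth

namespace TCRelu

/-- Duplicate the rows of a matrix. -/
def dupM {k n : ℕ} (M : Fin k → Fin n → ℝ) : Fin (k + k) → Fin n → ℝ :=
  fun i => if h : (i : ℕ) < k then M ⟨i, h⟩ else M ⟨(i : ℕ) - k, by omega⟩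

/-- Duplicate a bias vector, shifting the second copy down by 1. -/
def dupB {k : ℕ} (b : Fin k → ℤ) : Fin (k + k) → ℝ :=
  fun i => if h : (i : ℕ) < k then (b ⟨i, h⟩ : ℝ) else (b ⟨(i : ℕ) - k, by omega⟩ : ℝ) - 1

/-- The difference matrix: row `i` computes `u i - u (k+i)`. -/
def dM (k : ℕ) : Fin k → Fin (k + k) → ℝ :=
  fun i j => if (j : ℕ) = (i : ℕ) then 1 else if (j : ℕ) = k + i then -1 else 0

def mulM {a b n : ℕ} (A : Fin a → Fin b → ℤ) (P : Fin b → Fin n → ℝ) :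
    Fin a → Fin n → ℝ :=
  fun i j => ∑ l, (A i l : ℝ) * P l j

/-- Convert a threshold circuit to a ReLU net, precomposed with linear map `P`. -/
def conv : {n m q : ℕ} → (Fin m → Fin n → ℝ) → ThrCirc m q → Net n q
  | _, _, _, P, .last A b =>
      .layer (dupM (mulM A P)) (dupB b) (.last (dM _) (fun _ => 0))
  | _, _, _, P, .layer A b rest =>
      .layer (dupM (mulM A P)) (dupB b) (conv (dM _) rest)

lemma dupM_castAdd {k n : ℕ} (M : Fin k → Fin n → ℝ) (i : Fin k) :
    dupM M (Fin.castAdd k i) = M i := by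
  simp [dupM, Fin.castAdd]

lemma dupM_natAdd {k n : ℕ} (M : Fin k → Fin n → ℝ) (i : Fin k) :
    dupM M (Fin.natAdd k i) = M i := by
  have : ¬ ((Fin.natAdd k i : Fin (k + k)) : ℕ) < k := by simp [Fin.natAdd]
  simp [dupM, this, Fin.natAdd]

lemma dupB_castAdd {k : ℕ} (b : Fin k → ℤ) (i : Fin k) :
    dupB b (Fin.castAdd k i) = (b i : ℝ) := by
  simp [dupB, Fin.castAdd]

lemma dupB_natAdd {k : ℕ} (b : Fin k → ℤ) (i : Fin k) :
    dupB b (Fin.natAdd k i) = (b i : ℝ) - 1 := by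
  have : ¬ ((Fin.natAdd k i : Fin (k + k)) : ℕ) < k := by simp [Fin.natAdd]
  simp [dupB, this, Fin.natAdd]

lemma dM_sum {k : ℕ} (i : Fin k) (u : Fin (k + k) → ℝ) :
    (∑ j, dM k i j * u j) = u (Fin.castAdd k i) - u (Fin.natAdd k i) := by
  rw [Fin.sum_univ_add]
  have h1 : ∀ j : Fin k, dM k i (Fin.castAdd k j) * u (Fin.castAdd k j)
      = if j = i then u (Fin.castAdd k i) else 0 := by
    intro j
    have hv : ((Fin.castAdd k j : Fin (k + k)) : ℕ) = (j : ℕ) := rfl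
    unfold dM
    rw [hv]
    by_cases hji : j = i
    · subst hji; simp
    · have hvi : (j : ℕ) ≠ (i : ℕ) := fun h => hji (Fin.val_injective h)
      have hvk : (j : ℕ) ≠ k + (i : ℕ) := by omega
      simp [hvi, hvk, hji]
  have h2 : ∀ j : Fin k, dM k i (Fin.natAdd k j) * u (Fin.natAdd k j)
      = if j = i then -u (Fin.natAdd k i) else 0 := by
    intro j
    have hv : ((Fin.natAdd k j : Fin (k + k)) : ℕ) = k + (j : ℕ) := rfl
    unfold dM
    rw [hv]
    by_cases hji : j = i
    · subst hji
      have h3 : k + (j : ℕ) ≠ (j : ℕ) := by omega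
      have h3' : k ≠ 0 := by omega
      simp [h3, h3']
    · have hvi : k + (j : ℕ) ≠ (i : ℕ) := by omega
      have hvk : k + (j : ℕ) ≠ k + (i : ℕ) := by
        intro h; exact hji (Fin.val_injective (by omega))
      have hvj : (j : ℕ) ≠ (i : ℕ) := fun h => hji (Fin.val_injective h)
      simp [hvi, hvk, hji, hvj]
  simp only [h1, h2, Finset.sum_ite_eq' Finset.univ i, Finset.mem_univ, if_true]
  ring

lemma relu_diff_int (z : ℤ) : relu (z : ℝ) - relu ((z : ℝ) - 1) = (isgn z : ℝ) := by
  rcases le_or_gt z 0 with h | h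
  · have h1 : (z : ℝ) ≤ 0 := by exact_mod_cast h
    have h2 : ¬ (0 : ℤ) < z := not_lt.mpr h
    rw [relu, relu, max_eq_left h1, max_eq_left (by linarith)]
    simp [isgn, h2]
  · have h1 : (1 : ℤ) ≤ z := h
    have h2 : (1 : ℝ) ≤ (z : ℝ) := by exact_mod_cast h1
    rw [relu, relu, max_eq_right (by linarith), max_eq_right (by linarith)]
    simp [isgn, h]

lemma relu_diff_mem (w : ℝ) : relu w - relu (w - 1) ∈ Set.Icc (0 : ℝ) 1 := by
  simp only [relu, Set.mem_Icc]
  rcases le_or_gt w 0 with h | h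
  · rw [max_eq_left h, max_eq_left (by linarith)]; norm_num
  · rcases le_or_gt w 1 with h1 | h1
    · rw [max_eq_right h.le, max_eq_left (by linarith)]
      constructor <;> linarith
    · rw [max_eq_right h.le, max_eq_right (by linarith)]
      constructor <;> linarith

/-- First-layer neuron values of `conv`. -/
lemma layer_sum {k p n : ℕ} (A : Fin k → Fin p → ℤ) (P : Fin p → Fin n → ℝ)
    (x : Fin n → ℝ) (z : Fin p → ℤ) (hz : ∀ l, (∑ j, P l j * x j) = (z l : ℝ)) (i : Fin k) :
    (∑ j, mulM A P i j * x j) = ((∑ l, A i l * z l : ℤ) : ℝ) := by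
  unfold mulM
  push_cast
  have : (∑ j, (∑ l, (A i l : ℝ) * P l j) * x j)
      = ∑ l, (A i l : ℝ) * (∑ j, P l j * x j) := by
    simp only [Finset.sum_mul, Finset.mul_sum]
    rw [Finset.sum_comm]
    apply Finset.sum_congr rfl; intro j _
    apply Finset.sum_congr rfl; intro l _
    ring
  rw [this]
  apply Finset.sum_congr rfl; intro l _
  rw [hz l]

lemma conv_depth : ∀ {n m q : ℕ} (P : Fin m → Fin n → ℝ) (T : ThrCirc m q),
    (conv P T).depth = T.depth + 1
  | _, _, _, P, .last A b => by simp [conv, Net.depth, ThrCirc.depth]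
  | _, _, _, P, .layer A b rest => by
      simp [conv, Net.depth, ThrCirc.depth, conv_depth _ rest]; omega

lemma conv_size : ∀ {n m q : ℕ} (P : Fin m → Fin n → ℝ) (T : ThrCirc m q),
    (conv P T).size = 2 * T.size + q
  | _, _, _, P, .last A b => by simp [conv, Net.size, ThrCirc.size]; ring
  | _, _, _, P, .layer A b rest => by
      simp [conv, Net.size, ThrCirc.size, conv_size _ rest]; ring

lemma neuron_eq {k p n : ℕ} (A : Fin k → Fin p → ℤ) (b : Fin k → ℤ)
    (P : Fin p → Fin n → ℝ) (x : Fin n → ℝ) (z : Fin p → ℤ)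
    (hz : ∀ l, (∑ j, P l j * x j) = (z l : ℝ)) (i : Fin k) :
    relu ((∑ j, dupM (mulM A P) (Fin.castAdd k i) j * x j) + dupB b (Fin.castAdd k i))
      - relu ((∑ j, dupM (mulM A P) (Fin.natAdd k i) j * x j) + dupB b (Fin.natAdd k i))
    = ((isgn ((∑ l, A i l * z l) + b i) : ℤ) : ℝ) := by
  rw [dupM_castAdd, dupM_natAdd, dupB_castAdd, dupB_natAdd, layer_sum A P x z hz i]
  have h1 : ((∑ l, A i l * z l : ℤ) : ℝ) + (b i : ℝ) = (((∑ l, A i l * z l) + b i : ℤ) : ℝ) := by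
    push_cast; ring
  have h2 : ((∑ l, A i l * z l : ℤ) : ℝ) + ((b i : ℝ) - 1)
      = (((∑ l, A i l * z l) + b i : ℤ) : ℝ) - 1 := by push_cast; ring
  rw [h1, h2, relu_diff_int]

lemma conv_eval_correct : ∀ {n p q : ℕ} (P : Fin p → Fin n → ℝ) (T : ThrCirc p q)
    (x : Fin n → ℝ) (z : Fin p → ℤ), (∀ l, (∑ j, P l j * x j) = (z l : ℝ)) →
    ∀ i : Fin q, (conv P T).eval relu x i = ((T.eval z i : ℤ) : ℝ)
  | _, _, _, P, .last A b, x, z, hz, i => by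
    simp only [conv, Net.eval, ThrCirc.eval]
    rw [dM_sum]
    rw [add_zero]
    exact neuron_eq A b P x z hz i
  | _, _, _, P, .layer A b rest, x, z, hz, i => by
    simp only [conv, Net.eval, ThrCirc.eval]
    exact conv_eval_correct (dM _) rest _ (fun l => isgn ((∑ t, A l t * z t) + b l))
      (fun l => by rw [dM_sum]; exact neuron_eq A b P x z hz l) i

lemma conv_eval_bound : ∀ {n p q : ℕ} (P : Fin p → Fin n → ℝ) (T : ThrCirc p q)
    (x : Fin n → ℝ) (i : Fin q), (conv P T).eval relu x i ∈ Set.Icc (0 : ℝ) 1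
  | _, _, _, P, .last A b, x, i => by
    simp only [conv, Net.eval]
    rw [dM_sum, add_zero]
    have h2 : dupB b (Fin.natAdd _ i) = dupB b (Fin.castAdd _ i) - 1 := by
      rw [dupB_castAdd, dupB_natAdd]
    rw [dupM_castAdd, dupM_natAdd, h2, dupB_castAdd]
    have := relu_diff_mem ((∑ j, mulM A P i j * x j) + (b i : ℝ))
    convert this using 3
    ring
  | _, _, _, P, .layer A b rest, x, i => by
    simp only [conv, Net.eval]
    exact conv_eval_bound (dM _) rest _ i

end TCRelu

/-- for every threshold circuit `T` with `d` inputs, `q` outputs, depth `m`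
and size `s`, there is a ReLU network `N : ℝ^d → ℝ^q` of depth `m+1` and size `2s+q`
such that `N(x) = T(x)` for every `x ∈ {0,1}^d`, and moreover `N(x) ∈ [0,1]^q` for
every `x ∈ ℝ^d`. -/
theorem tc_to_relu_net (d q m s : ℕ) (T : ThrCirc d q) (hdepth : T.depth = m) (hsize : T.size = s) :
    ∃ N : Net d q, N.depth = m + 1 ∧ N.size = 2 * s + q ∧
      (∀ x : Fin d → Bool, ∀ i : Fin q,
        N.eval relu (fun j => if x j then 1 else 0) i
          = ((T.eval (fun j => if x j then 1 else 0) i : ℤ) : ℝ)) ∧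
      (∀ x : Fin d → ℝ, ∀ i : Fin q, N.eval relu x i ∈ Set.Icc (0:ℝ) 1) := by
  refine ⟨TCRelu.conv (fun l j => if j = l then 1 else 0) T, ?_, ?_, ?_, ?_⟩
  · rw [TCRelu.conv_depth, hdepth]
  · rw [TCRelu.conv_size, hsize]
  · intro x i
    apply TCRelu.conv_eval_correct
    intro l
    simp only [ite_mul, one_mul, zero_mul, Finset.sum_ite_eq', Finset.mem_univ, if_true]
    by_cases h : x l <;> simp [h]
  · intro x i
    exact TCRelu.conv_eval_bound _ T x i

end
end

section
/- If f : {0,1}^d → {0,1} is computed exactly by a threshold circuit of size s, or by a ReLU network of size s, then for every bipartition of the d input bits between Alice and Bob there is a real communication protocol of cost at most s + 1 computing f. Consequently, any threshold circuit or ReLU network computing a function of real communication complexity Ω(d) has size Ω(d). -/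
noncomputable section

/-- Combine Alice's bits (coordinates in `I`) and Bob's bits (coordinates not in `I`)
into a full input. -/
def mergeInput {d : ℕ} (I : Finset (Fin d))
    (a : {i // i ∈ I} → Bool) (b : {i // i ∉ I} → Bool) : Fin d → Bool :=
  fun i => if h : i ∈ I then a ⟨i, h⟩ else b ⟨i, h⟩

/-- The transcript after `t` rounds of a real communication protocol: in each round
Alice announces a real number `α` (a function of her input and the current transcript),
Bob announces a real number `β`, and the referee appends `1` to the transcript if
`α > β` and `0` otherwise. -/
def realTrans {A B : Type} (α : A → List Bool → ℝ) (β : B → List Bool → ℝ)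
    (a : A) (b : B) : ℕ → List Bool
  | 0 => []
  | t + 1 =>
      realTrans α β a b t ++
        [decide (β b (realTrans α β a b t) < α a (realTrans α β a b t))]

namespace RealCommAux

/-! ### Generic lemmas about `realTrans` -/

lemma realTrans_length {A B : Type} (α : A → List Bool → ℝ) (β : B → List Bool → ℝ)
    (a : A) (b : B) : ∀ t, (realTrans α β a b t).length = t
  | 0 => rfl
  | t + 1 => by
      rw [realTrans]
      simp [realTrans_length α β a b t]

lemma realTrans_comp {A B A' B' : Type} (α : A' → List Bool → ℝ) (β : B' → List Bool → ℝ)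
    (g : A → A') (h : B → B') (a : A) (b : B) :
    ∀ t, realTrans (fun a w => α (g a) w) (fun b w => β (h b) w) a b t
      = realTrans α β (g a) (h b) t
  | 0 => rfl
  | t + 1 => by
      rw [realTrans, realTrans, realTrans_comp α β g h a b t]

lemma realTrans_shift {A B A' B' : Type} {α : A → List Bool → ℝ} {β : B → List Bool → ℝ}
    {α' : A' → List Bool → ℝ} {β' : B' → List Bool → ℝ}
    {a : A} {b : B} {a' : A'} {b' : B'} {m : ℕ} {w0 : List Bool}
    (h0 : realTrans α β a b m = w0)
    (hα : ∀ w, α a (w0 ++ w) = α' a' w) (hβ : ∀ w, β b (w0 ++ w) = β' b' w) :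
    ∀ t, realTrans α β a b (m + t) = w0 ++ realTrans α' β' a' b' t
  | 0 => by
      rw [Nat.add_zero, h0, show realTrans α' β' a' b' 0 = [] from rfl, List.append_nil]
  | t + 1 => by
      have IH := realTrans_shift h0 hα hβ t
      have e : m + (t + 1) = (m + t) + 1 := rfl
      rw [e, realTrans, IH, hα, hβ, realTrans]
      simp

/-! ### The protocol simulating a ReLU network -/

def netA : {n : ℕ} → Net n 1 → (Fin n → ℝ) → List Bool → ℝ
  | _, .last A b, x, _ => (∑ j, A 0 j * x j) + b 0 - 1/2
  | _, .layer (m := m) A b rest, x, w =>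
      if h : w.length < m then (∑ j, A ⟨w.length, h⟩ j * x j) + b ⟨w.length, h⟩
      else netA rest (fun k => if w.getD k false then (∑ j, A k j * x j) + b k else 0)
        (w.drop m)

def netB : {n : ℕ} → Net n 1 → (Fin n → ℝ) → List Bool → ℝ
  | _, .last A _, x, _ => -(∑ j, A 0 j * x j)
  | _, .layer (m := m) A _ rest, x, w =>
      if h : w.length < m then -(∑ j, A ⟨w.length, h⟩ j * x j)
      else netB rest (fun k => if w.getD k false then (∑ j, A k j * x j) else 0) (w.drop m)

lemma net_first {n m : ℕ} (A : Fin m → Fin n → ℝ) (b : Fin m → ℝ) (rest : Net m 1)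
    (xa xb : Fin n → ℝ) :
    ∀ t (ht : t ≤ m),
      realTrans (netA (.layer A b rest)) (netB (.layer A b rest)) xa xb t
        = List.ofFn (fun k : Fin t =>
            decide ((0:ℝ) < (∑ j, A (Fin.castLE ht k) j * (xa j + xb j))
              + b (Fin.castLE ht k)))
  | 0, _ => rfl
  | t + 1, ht => by
      have ht' : t ≤ m := Nat.le_of_succ_le ht
      have htm : t < m := ht
      rw [realTrans, net_first A b rest xa xb t ht']
      rw [List.ofFn_succ']
      rw [List.concat_eq_append]
      refine congrArg₂ (· ++ ·) rfl ?_
      refine congrArg (fun z => [z]) ?_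
      have hlen : (List.ofFn fun k : Fin t =>
          decide ((0:ℝ) < (∑ j, A (Fin.castLE ht' k) j * (xa j + xb j))
            + b (Fin.castLE ht' k))).length = t := by simp
      rw [netA, netB, dif_pos (by rw [hlen]; exact htm), dif_pos (by rw [hlen]; exact htm)]
      have hidx : (⟨(List.ofFn fun k : Fin t =>
          decide ((0:ℝ) < (∑ j, A (Fin.castLE ht' k) j * (xa j + xb j))
            + b (Fin.castLE ht' k))).length, by rw [hlen]; exact htm⟩ : Fin m)
          = Fin.castLE ht (Fin.last t) := by
        apply Fin.ext; simp [hlen]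
      rw [hidx]
      apply decide_eq_decide.mpr
      have hsum : (∑ j, A (Fin.castLE ht (Fin.last t)) j * (xa j + xb j))
          = (∑ j, A (Fin.castLE ht (Fin.last t)) j * xa j)
            + (∑ j, A (Fin.castLE ht (Fin.last t)) j * xb j) := by
        rw [← Finset.sum_add_distrib]; congr 1; funext j; ring
      rw [hsum]
      constructor <;> intro <;> linarith

lemma net_spec : ∀ {n : ℕ} (N : Net n 1) (xa xb : Fin n → ℝ),
    (realTrans (netA N) (netB N) xa xb N.size).getLast?
      = some (decide ((1:ℝ)/2 < N.eval relu (fun j => xa j + xb j) 0))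
  | _, .last A b, xa, xb => by
      show (realTrans (netA (.last A b)) (netB (.last A b)) xa xb 1).getLast? = _
      rw [realTrans]
      show ((realTrans _ _ _ _ 0) ++ _).getLast? = _
      rw [realTrans]
      simp only [List.nil_append, List.getLast?_singleton, Option.some.injEq]
      show decide (netB (.last A b) xb [] < netA (.last A b) xa []) = _
      rw [netA, netB, Net.eval]
      apply decide_eq_decide.mpr
      have hsum : (∑ j, A 0 j * (xa j + xb j))
          = (∑ j, A 0 j * xa j) + (∑ j, A 0 j * xb j) := by
        rw [← Finset.sum_add_distrib]; congr 1; funext j; ring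
      rw [hsum]
      constructor <;> intro <;> linarith
  | _, .layer (m := m) A b rest, xa, xb => by
      have h0 := net_first A b rest xa xb m le_rfl
      set bitf : Fin m → Bool := fun k =>
        decide ((0:ℝ) < (∑ j, A (Fin.castLE le_rfl k) j * (xa j + xb j))
          + b (Fin.castLE le_rfl k)) with hbitf
      set w0 : List Bool := List.ofFn bitf with hw0
      have hlen : w0.length = m := by simp [hw0]
      set xa' : Fin m → ℝ := fun k => if bitf k then (∑ j, A k j * xa j) + b k else 0 with hxa'
      set xb' : Fin m → ℝ := fun k => if bitf k then (∑ j, A k j * xb j) else 0 with hxb'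
      have hgetD : ∀ (w : List Bool) (k : Fin m), (w0 ++ w).getD (k : ℕ) false = bitf k := by
        intro w k
        rw [List.getD_append _ _ _ _ (by rw [hlen]; exact k.2)]
        rw [List.getD_eq_getElem _ _ (by rw [hlen]; exact k.2)]
        simp [hw0]
      have hdrop : ∀ (w : List Bool), (w0 ++ w).drop m = w := by
        intro w; rw [← hlen]; exact List.drop_left
      have hα : ∀ w, netA (.layer A b rest) xa (w0 ++ w) = netA rest xa' w := by
        intro w
        rw [netA, dif_neg (by simp [hlen])]
        rw [hdrop]
        congr 1
        funext k
        rw [hgetD w k]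
      have hβ : ∀ w, netB (.layer A b rest) xb (w0 ++ w) = netB rest xb' w := by
        intro w
        rw [netB, dif_neg (by simp [hlen])]
        rw [hdrop]
        congr 1
        funext k
        rw [hgetD w k]
      have hshift := realTrans_shift h0 hα hβ rest.size
      show (realTrans (netA (.layer A b rest)) (netB (.layer A b rest)) xa xb
        (m + rest.size)).getLast? = _
      rw [hshift, List.getLast?_append, net_spec rest xa' xb']
      rw [show ∀ (x : Bool) (y : Option Bool), (some x).or y = some x from fun _ _ => rfl]
      have hx : (fun k => xa' k + xb' k)
          = (fun k => relu ((∑ j, A k j * (xa j + xb j)) + b k)) := by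
        funext k
        have hsum : (∑ j, A k j * (xa j + xb j))
            = (∑ j, A k j * xa j) + (∑ j, A k j * xb j) := by
          rw [← Finset.sum_add_distrib]; congr 1; funext j; ring
        by_cases h : (0:ℝ) < (∑ j, A k j * (xa j + xb j)) + b k
        · have hb : bitf k = true := by simp [hbitf, Fin.castLE]; exact h
          simp only [hxa', hxb']
          rw [hb, if_pos rfl, if_pos rfl, relu, max_eq_right h.le, hsum]
          ring
        · have hb : bitf k = false := by simp [hbitf, Fin.castLE]; exact le_of_not_gt h
          simp only [hxa', hxb']
          rw [hb, if_neg (by simp), if_neg (by simp), relu, max_eq_left (le_of_not_gt h)]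
          ring
      have heval : Net.eval relu (Net.layer A b rest) (fun j => xa j + xb j)
          = rest.eval relu (fun k => relu ((∑ j, A k j * (xa j + xb j)) + b k)) := rfl
      rw [heval, ← hx]


/-! ### The protocol simulating a threshold circuit -/

lemma isgn_pos_iff {z : ℤ} : 0 < isgn z ↔ 0 < z := by
  unfold isgn; by_cases h : 0 < z <;> simp [h]

lemma key_gate {u v w : ℤ} : (-((v:ℝ)) < ((u + w : ℤ):ℝ)) ↔ 0 < u + v + w := by
  have h1 : (-((v:ℝ)) < ((u + w : ℤ):ℝ)) ↔ ((0:ℝ) < ((u + v + w : ℤ):ℝ)) := by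
    push_cast; constructor <;> intro <;> linarith
  rw [h1, Int.cast_pos]

lemma key_last {u v w : ℤ} : (-((v:ℝ)) < ((u + w : ℤ):ℝ) - 1/2) ↔ 0 < u + v + w := by
  have h1 : (-((v:ℝ)) < ((u + w : ℤ):ℝ) - 1/2) ↔ ((1:ℝ)/2 < ((u + v + w : ℤ):ℝ)) := by
    push_cast; constructor <;> intro <;> linarith
  rw [h1]
  constructor
  · intro h
    have h0 : (0:ℝ) < ((u + v + w : ℤ):ℝ) := by linarith
    exact_mod_cast h0
  · intro h
    have h2 : (1:ℝ) ≤ ((u + v + w : ℤ):ℝ) := by exact_mod_cast h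
    linarith

def circA : {n : ℕ} → ThrCirc n 1 → (Fin n → ℤ) → List Bool → ℝ
  | _, .last A b, x, _ => (((∑ j, A 0 j * x j) + b 0 : ℤ) : ℝ) - 1/2
  | _, .layer (m := m) A b rest, x, w =>
      if h : w.length < m then (((∑ j, A ⟨w.length, h⟩ j * x j) + b ⟨w.length, h⟩ : ℤ) : ℝ)
      else circA rest (fun k => if w.getD k false then 1 else 0) (w.drop m)

def circB : {n : ℕ} → ThrCirc n 1 → (Fin n → ℤ) → List Bool → ℝ
  | _, .last A _, x, _ => -(((∑ j, A 0 j * x j : ℤ) : ℝ))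
  | _, .layer (m := m) A _ rest, x, w =>
      if h : w.length < m then -(((∑ j, A ⟨w.length, h⟩ j * x j : ℤ) : ℝ))
      else circB rest (fun _ => 0) (w.drop m)

lemma circ_first {n m : ℕ} (A : Fin m → Fin n → ℤ) (b : Fin m → ℤ) (rest : ThrCirc m 1)
    (xa xb : Fin n → ℤ) :
    ∀ t (ht : t ≤ m),
      realTrans (circA (.layer A b rest)) (circB (.layer A b rest)) xa xb t
        = List.ofFn (fun k : Fin t =>
            decide ((0:ℤ) < (∑ j, A (Fin.castLE ht k) j * (xa j + xb j))
              + b (Fin.castLE ht k)))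
  | 0, _ => rfl
  | t + 1, ht => by
      have ht' : t ≤ m := Nat.le_of_succ_le ht
      have htm : t < m := ht
      rw [realTrans, circ_first A b rest xa xb t ht']
      rw [List.ofFn_succ', List.concat_eq_append]
      refine congrArg₂ (· ++ ·) rfl ?_
      refine congrArg (fun z => [z]) ?_
      have hlen : (List.ofFn fun k : Fin t =>
          decide ((0:ℤ) < (∑ j, A (Fin.castLE ht' k) j * (xa j + xb j))
            + b (Fin.castLE ht' k))).length = t := by simp
      rw [circA, circB, dif_pos (by rw [hlen]; exact htm), dif_pos (by rw [hlen]; exact htm)]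
      have hidx : (⟨(List.ofFn fun k : Fin t =>
          decide ((0:ℤ) < (∑ j, A (Fin.castLE ht' k) j * (xa j + xb j))
            + b (Fin.castLE ht' k))).length, by rw [hlen]; exact htm⟩ : Fin m)
          = Fin.castLE ht (Fin.last t) := by
        apply Fin.ext; simp [hlen]
      rw [hidx]
      apply decide_eq_decide.mpr
      have hsum : (∑ j, A (Fin.castLE ht (Fin.last t)) j * (xa j + xb j))
          = (∑ j, A (Fin.castLE ht (Fin.last t)) j * xa j)
            + (∑ j, A (Fin.castLE ht (Fin.last t)) j * xb j) := by
        rw [← Finset.sum_add_distrib]; congr 1; funext j; ring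
      rw [hsum]
      exact key_gate

lemma circ_spec : ∀ {n : ℕ} (T : ThrCirc n 1) (xa xb : Fin n → ℤ),
    (realTrans (circA T) (circB T) xa xb T.size).getLast?
      = some (decide ((0:ℤ) < T.eval (fun j => xa j + xb j) 0))
  | _, .last A b, xa, xb => by
      show (realTrans (circA (.last A b)) (circB (.last A b)) xa xb 1).getLast? = _
      rw [realTrans]
      show ((realTrans _ _ _ _ 0) ++ _).getLast? = _
      rw [realTrans]
      simp only [List.nil_append, List.getLast?_singleton, Option.some.injEq]
      show decide (circB (.last A b) xb [] < circA (.last A b) xa []) = _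
      rw [circA, circB, ThrCirc.eval]
      apply decide_eq_decide.mpr
      rw [key_last, isgn_pos_iff]
      have hsum : (∑ j, A 0 j * (xa j + xb j))
          = (∑ j, A 0 j * xa j) + (∑ j, A 0 j * xb j) := by
        rw [← Finset.sum_add_distrib]; congr 1; funext j; ring
      rw [hsum]
  | _, .layer (m := m) A b rest, xa, xb => by
      have h0 := circ_first A b rest xa xb m le_rfl
      set bitf : Fin m → Bool := fun k =>
        decide ((0:ℤ) < (∑ j, A (Fin.castLE le_rfl k) j * (xa j + xb j))
          + b (Fin.castLE le_rfl k)) with hbitf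
      set w0 : List Bool := List.ofFn bitf with hw0
      have hlen : w0.length = m := by simp [hw0]
      set xa' : Fin m → ℤ := fun k => if bitf k then 1 else 0 with hxa'
      set xb' : Fin m → ℤ := fun _ => 0 with hxb'
      have hgetD : ∀ (w : List Bool) (k : Fin m), (w0 ++ w).getD (k : ℕ) false = bitf k := by
        intro w k
        rw [List.getD_append _ _ _ _ (by rw [hlen]; exact k.2)]
        rw [List.getD_eq_getElem _ _ (by rw [hlen]; exact k.2)]
        simp [hw0]
      have hdrop : ∀ (w : List Bool), (w0 ++ w).drop m = w := by
        intro w; rw [← hlen]; exact List.drop_left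
      have hα : ∀ w, circA (.layer A b rest) xa (w0 ++ w) = circA rest xa' w := by
        intro w
        rw [circA, dif_neg (by simp [hlen])]
        rw [hdrop]
        congr 1
        funext k
        rw [hgetD w k]
      have hβ : ∀ w, circB (.layer A b rest) xb (w0 ++ w) = circB rest xb' w := by
        intro w
        rw [circB, dif_neg (by simp [hlen]), hdrop]
      have hshift := realTrans_shift h0 hα hβ rest.size
      show (realTrans (circA (.layer A b rest)) (circB (.layer A b rest)) xa xb
        (m + rest.size)).getLast? = _
      rw [hshift, List.getLast?_append, circ_spec rest xa' xb']
      rw [show ∀ (x : Bool) (y : Option Bool), (some x).or y = some x from fun _ _ => rfl]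
      have hx : (fun k => xa' k + xb' k)
          = (fun k => isgn ((∑ j, A k j * (xa j + xb j)) + b k)) := by
        funext k
        by_cases h : (0:ℤ) < (∑ j, A k j * (xa j + xb j)) + b k
        · have hb : bitf k = true := by simp [hbitf, Fin.castLE]; exact h
          simp only [hxa', hxb']
          rw [hb, if_pos rfl, isgn, if_pos h]
          ring
        · have hb : bitf k = false := by simp [hbitf, Fin.castLE]; exact le_of_not_gt h
          simp only [hxa', hxb']
          rw [hb, if_neg (by simp), isgn, if_neg h]
          ring
      have heval : ThrCirc.eval (.layer A b rest) (fun j => xa j + xb j)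
          = rest.eval (fun k => isgn ((∑ j, A k j * (xa j + xb j)) + b k)) := rfl
      rw [heval, ← hx]

end RealCommAux

/-- if `f : {0,1}^d → {0,1}` is computed exactly by a threshold circuit
of size `s`, or by a ReLU network of size `s`, then for every bipartition of the `d`
input bits between Alice and Bob there is a real communication protocol of cost at most
`s + 1` computing `f` (the value of `f` is determined by the final transcript). -/
theorem circuit_to_real_communication (d s : ℕ) (f : (Fin d → Bool) → Bool)
    (hf : (∃ T : ThrCirc d 1, T.size = s ∧ ∀ x : Fin d → Bool,
            T.eval (fun j => if x j then 1 else 0) 0 = (if f x then 1 else 0)) ∨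
          (∃ N : Net d 1, N.size = s ∧ ∀ x : Fin d → Bool,
            N.eval relu (fun j => if x j then 1 else 0) 0 = (if f x then 1 else 0)))
    (I : Finset (Fin d)) (hI : I.Nonempty) (hIc : ∃ i, i ∉ I) :
    ∃ t ≤ s + 1,
      ∃ (α : ({i // i ∈ I} → Bool) → List Bool → ℝ)
        (β : ({i // i ∉ I} → Bool) → List Bool → ℝ)
        (out : List Bool → Bool),
        ∀ (aIn : {i // i ∈ I} → Bool) (bIn : {i // i ∉ I} → Bool),
          out (realTrans α β aIn bIn t) = f (mergeInput I aIn bIn) := by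
  classical
  rcases hf with ⟨T, hs, hT⟩ | ⟨N, hs, hN⟩
  · refine ⟨T.size, by omega, ?_⟩
    refine ⟨fun aIn w => RealCommAux.circA T
        (fun j => if h : j ∈ I then (if aIn ⟨j, h⟩ then 1 else 0) else 0) w,
      fun bIn w => RealCommAux.circB T
        (fun j => if h : j ∈ I then 0 else (if bIn ⟨j, h⟩ then 1 else 0)) w,
      fun w => w.getLastD false, ?_⟩
    intro aIn bIn
    rw [RealCommAux.realTrans_comp (RealCommAux.circA T) (RealCommAux.circB T)
      (fun aIn : {i // i ∈ I} → Bool =>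
        (fun j => if h : j ∈ I then (if aIn ⟨j, h⟩ then (1:ℤ) else 0) else 0))
      (fun bIn : {i // i ∉ I} → Bool =>
        (fun j => if h : j ∈ I then 0 else (if bIn ⟨j, h⟩ then (1:ℤ) else 0))) aIn bIn T.size]
    have hspec := RealCommAux.circ_spec T
      (fun j => if h : j ∈ I then (if aIn ⟨j, h⟩ then (1:ℤ) else 0) else 0)
      (fun j => if h : j ∈ I then 0 else (if bIn ⟨j, h⟩ then (1:ℤ) else 0))
    have hmerge : (fun j => (if h : j ∈ I then (if aIn ⟨j, h⟩ then (1:ℤ) else 0) else 0)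
          + (if h : j ∈ I then 0 else (if bIn ⟨j, h⟩ then (1:ℤ) else 0)))
        = (fun j => if mergeInput I aIn bIn j then (1:ℤ) else 0) := by
      funext j
      by_cases h : j ∈ I <;> simp [mergeInput, h]
    rw [hmerge] at hspec
    beta_reduce
    rw [List.getLastD_eq_getLast?, hspec, hT (mergeInput I aIn bIn)]
    by_cases hfx : f (mergeInput I aIn bIn) <;> simp [hfx]
  · refine ⟨N.size, by omega, ?_⟩
    refine ⟨fun aIn w => RealCommAux.netA N
        (fun j => if h : j ∈ I then (if aIn ⟨j, h⟩ then 1 else 0) else 0) w,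
      fun bIn w => RealCommAux.netB N
        (fun j => if h : j ∈ I then 0 else (if bIn ⟨j, h⟩ then 1 else 0)) w,
      fun w => w.getLastD false, ?_⟩
    intro aIn bIn
    rw [RealCommAux.realTrans_comp (RealCommAux.netA N) (RealCommAux.netB N)
      (fun aIn : {i // i ∈ I} → Bool =>
        (fun j => if h : j ∈ I then (if aIn ⟨j, h⟩ then (1:ℝ) else 0) else 0))
      (fun bIn : {i // i ∉ I} → Bool =>
        (fun j => if h : j ∈ I then 0 else (if bIn ⟨j, h⟩ then (1:ℝ) else 0))) aIn bIn N.size]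
    have hspec := RealCommAux.net_spec N
      (fun j => if h : j ∈ I then (if aIn ⟨j, h⟩ then (1:ℝ) else 0) else 0)
      (fun j => if h : j ∈ I then 0 else (if bIn ⟨j, h⟩ then (1:ℝ) else 0))
    have hmerge : (fun j => (if h : j ∈ I then (if aIn ⟨j, h⟩ then (1:ℝ) else 0) else 0)
          + (if h : j ∈ I then 0 else (if bIn ⟨j, h⟩ then (1:ℝ) else 0)))
        = (fun j => if mergeInput I aIn bIn j then (1:ℝ) else 0) := by
      funext j
      by_cases h : j ∈ I <;> simp [mergeInput, h]
    rw [hmerge] at hspec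
    beta_reduce
    rw [List.getLastD_eq_getLast?, hspec, hN (mergeInput I aIn bIn)]
    by_cases hfx : f (mergeInput I aIn bIn) <;> simp [hfx] <;> norm_num


end
end

section
/- Let A, B ⊆ {0,1}^d be such that Σ_{i=1}^d a_i b_i is odd for every a ∈ A and every b ∈ B. Then |A| · |B| ≤ 2^d. (Equivalently, every 1-monochromatic rectangle of the communication matrix of the inner product function IP_d has at most 2^d entries.) -/
section IPAux

variable {d : ℕ}

/-- The sign `(-1)^{⟨a,b⟩}` written as a product. -/
def ipSign (a b : Fin d → Bool) : ℤ := ∏ i, (if a i && b i then (-1 : ℤ) else 1)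

lemma ipSign_eq_pow (a b : Fin d → Bool) :
    ipSign a b = (-1 : ℤ) ^ (∑ i, (if a i then 1 else 0) * (if b i then 1 else 0) : ℕ) := by
  rw [ipSign, ← Finset.prod_pow_eq_pow_sum]
  refine Finset.prod_congr rfl fun i _ => ?_
  cases a i <;> cases b i <;> simp

lemma ipSign_orth (a a' : Fin d → Bool) :
    ∑ b : Fin d → Bool, ipSign a b * ipSign a' b = if a = a' then (2 : ℤ) ^ d else 0 := by
  have key : ∀ b : Fin d → Bool, ipSign a b * ipSign a' b =
      ∏ i, ((if a i && b i then (-1 : ℤ) else 1) * (if a' i && b i then (-1 : ℤ) else 1)) := by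
    intro b; rw [ipSign, ipSign, ← Finset.prod_mul_distrib]
  simp_rw [key]
  rw [← Fintype.prod_sum fun i c =>
      (if a i && c then (-1 : ℤ) else 1) * (if a' i && c then (-1 : ℤ) else 1)]
  have : ∀ i : Fin d, (∑ c : Bool,
      (if a i && c then (-1 : ℤ) else 1) * (if a' i && c then (-1 : ℤ) else 1)) =
      if a i = a' i then 2 else 0 := by
    intro i
    cases ha : a i <;> cases ha' : a' i <;> simp [Fintype.sum_bool]
  simp_rw [this]
  by_cases hq : a = a'
  · subst hq; simp
  · rw [if_neg hq]
    obtain ⟨i, hi⟩ : ∃ i, a i ≠ a' i := by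
      by_contra hc; push_neg at hc; exact hq (funext hc)
    exact Finset.prod_eq_zero (Finset.mem_univ i) (if_neg hi)

end IPAux

/-- let `A, B ⊆ {0,1}^d` be such that `Σ_i a_i b_i` is odd for every
`a ∈ A` and every `b ∈ B`. Then `|A| · |B| ≤ 2^d`. (Every 1-monochromatic rectangle of
the communication matrix of the inner product function has at most `2^d` entries.) -/
theorem ip_one_monochromatic_rectangle_bound (d : ℕ) (A B : Finset (Fin d → Bool))
    (h : ∀ a ∈ A, ∀ b ∈ B,
      Odd (∑ i, (if a i then 1 else 0) * (if b i then 1 else 0) : ℕ)) :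
    A.card * B.card ≤ 2 ^ d := by
  rcases A.eq_empty_or_nonempty with rfl | ⟨a0, ha0⟩
  · simp
  have hsign : ∀ a ∈ A, ∀ b ∈ B, ipSign a b = -1 := by
    intro a ha b hb
    rw [ipSign_eq_pow]
    exact Odd.neg_one_pow (h a ha b hb)
  -- value of inner sum on B
  have hinner : ∀ b ∈ B, (∑ a ∈ A, ipSign a b) = -(A.card : ℤ) := by
    intro b hb
    rw [Finset.sum_congr rfl (fun a ha => hsign a ha b hb)]
    simp
  -- total sum over all b of square
  have htotal : (∑ b : Fin d → Bool, (∑ a ∈ A, ipSign a b) ^ 2)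
      = (A.card : ℤ) * 2 ^ d := by
    have : ∀ b : Fin d → Bool, (∑ a ∈ A, ipSign a b) ^ 2
        = ∑ a ∈ A, ∑ a' ∈ A, ipSign a b * ipSign a' b := by
      intro b; rw [sq, Finset.sum_mul_sum]
    calc (∑ b : Fin d → Bool, (∑ a ∈ A, ipSign a b) ^ 2)
        = ∑ b : Fin d → Bool, ∑ a ∈ A, ∑ a' ∈ A, ipSign a b * ipSign a' b := by
          simp_rw [this]
      _ = ∑ a ∈ A, ∑ b : Fin d → Bool, ∑ a' ∈ A, ipSign a b * ipSign a' b :=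
          Finset.sum_comm
      _ = ∑ a ∈ A, ∑ a' ∈ A, ∑ b : Fin d → Bool, ipSign a b * ipSign a' b :=
          Finset.sum_congr rfl fun a _ => Finset.sum_comm
      _ = ∑ a ∈ A, ∑ a' ∈ A, if a = a' then (2 : ℤ) ^ d else 0 := by
          simp_rw [ipSign_orth]
      _ = ∑ _a ∈ A, (2 : ℤ) ^ d :=
          Finset.sum_congr rfl fun a ha => by
            rw [Finset.sum_ite_eq A a fun _ => (2 : ℤ) ^ d, if_pos ha]
      _ = (A.card : ℤ) * 2 ^ d := by simp
  have hle : (A.card : ℤ) ^ 2 * B.card ≤ (A.card : ℤ) * 2 ^ d := by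
    calc (A.card : ℤ) ^ 2 * B.card = ∑ b ∈ B, (∑ a ∈ A, ipSign a b) ^ 2 := by
          rw [Finset.sum_congr rfl (fun b hb => by rw [hinner b hb])]
          simp [mul_comm]
      _ ≤ ∑ b : Fin d → Bool, (∑ a ∈ A, ipSign a b) ^ 2 := by
          exact Finset.sum_le_sum_of_subset_of_nonneg (Finset.subset_univ B)
            (fun b _ _ => sq_nonneg _)
      _ = (A.card : ℤ) * 2 ^ d := htotal
  have hApos : (0 : ℤ) < A.card := by exact_mod_cast Finset.card_pos.mpr ⟨a0, ha0⟩
  have : (A.card : ℤ) * ((A.card : ℤ) * B.card) ≤ (A.card : ℤ) * 2 ^ d := by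
    calc (A.card : ℤ) * ((A.card : ℤ) * B.card) = (A.card : ℤ) ^ 2 * B.card := by ring
      _ ≤ (A.card : ℤ) * 2 ^ d := hle
  have := le_of_mul_le_mul_left this hApos
  exact_mod_cast this
end

section
/- For all x, y ∈ {0,1}^d, writing s = Σ_{i=1}^d max(0, x_i + y_i − 1): IP_d(x,y) = Σ_{k=1}^d (−1)^{k−1}·( max(0, s − k + 1) − max(0, s − k) ). In particular, IP_d is computed exactly on Boolean inputs by a ReLU network of depth 3 and size at most 3d + 1. -/
noncomputable section

/-- The inner product function `IP_d(x,y) = Σ_i x_i y_i mod 2 ∈ {0,1}`. -/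
def IPn (d : ℕ) (x y : Fin d → Bool) : ℕ :=
  (∑ i, (if x i then 1 else 0) * (if y i then 1 else 0)) % 2

/- ### Auxiliary lemmas -/

lemma ind_eq (a b : Bool) :
    max 0 ((if a then (1:ℝ) else 0) + (if b then 1 else 0) - 1)
      = if a && b then 1 else 0 := by
  cases a <;> cases b <;> norm_num

lemma stepmax (m k : ℕ) :
    max 0 ((m:ℝ) - k) - max 0 ((m:ℝ) - (k+1)) = if k < m then 1 else 0 := by
  rcases le_or_gt m k with h | h
  · have h1 : (m:ℝ) ≤ k := by exact_mod_cast h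
    rw [max_eq_left (by linarith), max_eq_left (by linarith), if_neg (by omega)]
    ring
  · have h1 : (k:ℝ) + 1 ≤ m := by exact_mod_cast h
    rw [max_eq_right (by linarith), max_eq_right (by linarith), if_pos h]
    ring

lemma core (d m : ℕ) (hm : m ≤ d) :
    ((m % 2 : ℕ) : ℝ)
      = ∑ k ∈ Finset.range d,
          (-1:ℝ)^k * (max 0 ((m:ℝ) - k) - max 0 ((m:ℝ) - (k+1))) := by
  have h1 : ∀ k ∈ Finset.range d,
      (-1:ℝ)^k * (max 0 ((m:ℝ) - k) - max 0 ((m:ℝ) - (k+1)))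
        = if k < m then (-1:ℝ)^k else 0 := by
    intro k _
    rw [stepmax]
    split <;> ring
  rw [Finset.sum_congr rfl h1]
  rw [← Finset.sum_subset (Finset.range_subset_range.mpr hm)
    (fun k _ hk => by rw [if_neg]; simpa using hk)]
  have h2 : ∀ k ∈ Finset.range m, (if k < m then (-1:ℝ)^k else 0) = (-1:ℝ)^k := by
    intro k hk; rw [if_pos (Finset.mem_range.mp hk)]
  rw [Finset.sum_congr rfl h2, neg_one_geom_sum]
  rcases Nat.even_or_odd m with h | h
  · simp [h, Nat.even_iff.mp h]
  · simp [Nat.odd_iff.mp h, Nat.even_iff]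

lemma castsub (m k : ℕ) : ((m - k : ℕ) : ℝ) = max 0 ((m:ℝ) - k) := by
  rcases le_total m k with h | h
  · have h1 : (m:ℝ) ≤ k := by exact_mod_cast h
    rw [Nat.sub_eq_zero_of_le h, max_eq_left (by linarith)]
    simp

  · rw [Nat.cast_sub h, max_eq_right (by
      have : (k:ℝ) ≤ m := by exact_mod_cast h
      linarith)]

/-- First-layer weights: neuron `i` reads `x_i + y_i`. -/
def netA1 (d : ℕ) : Fin d → Fin (d + d) → ℝ :=
  fun i => Fin.append (fun j => if j = i then 1 else 0) (fun j => if j = i then 1 else 0)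

/-- Second-layer biases. -/
def netB2 (d : ℕ) : Fin (d + d) → ℝ :=
  Fin.append (fun k : Fin d => -(k:ℝ)) (fun k : Fin d => -((k:ℝ) + 1))

/-- Output weights. -/
def netC (d : ℕ) : Fin 1 → Fin (d + d) → ℝ :=
  fun _ => Fin.append (fun k : Fin d => (-1:ℝ)^(k:ℕ)) (fun k : Fin d => -(-1:ℝ)^(k:ℕ))

/-- The network. -/
def theNet (d : ℕ) : Net (d + d) 1 :=
  .layer (netA1 d) (fun _ => -1)
    (.layer (fun _ _ => 1) (netB2 d)
      (.last (netC d) (fun _ => 0)))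

lemma final_sums (d m : ℕ) :
    ((∑ k : Fin d, (-1:ℝ)^(k:ℕ) * max 0 ((m:ℝ) + -(k:ℝ)))
      + ∑ k : Fin d, -(-1:ℝ)^(k:ℕ) * max 0 ((m:ℝ) + -((k:ℝ) + 1)))
    = ∑ k ∈ Finset.range d,
        (-1:ℝ)^k * (max 0 ((m:ℝ) - k) - max 0 ((m:ℝ) - (k+1))) := by
  rw [Fin.sum_univ_eq_sum_range (fun k => (-1:ℝ)^k * max 0 ((m:ℝ) + -(k:ℝ))),
      Fin.sum_univ_eq_sum_range (fun k => -(-1:ℝ)^k * max 0 ((m:ℝ) + -((k:ℝ) + 1))),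
      ← Finset.sum_add_distrib]
  refine Finset.sum_congr rfl fun k _ => ?_
  rw [show (m:ℝ) + -(k:ℝ) = (m:ℝ) - k by ring,
      show (m:ℝ) + -((k:ℝ) + 1) = (m:ℝ) - (k+1) by ring]
  ring

/-- for all `x, y ∈ {0,1}^d`, writing `s = Σ_i max(0, x_i + y_i − 1)`,
`IP_d(x,y) = Σ_{k=1}^d (−1)^{k−1}·(max(0, s−k+1) − max(0, s−k))` (below the sum is
reindexed by `k ∈ {0,…,d−1}`); in particular `IP_d` is computed exactly on Boolean
inputs by a ReLU network of depth `3` and size at most `3d + 1`. -/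
theorem ip_relu_formula_and_net (d : ℕ) :
    (∀ x y : Fin d → Bool,
      ((IPn d x y : ℝ))
        = ∑ k ∈ Finset.range d,
            (-1 : ℝ) ^ k *
              (max 0 ((∑ i, max 0 ((if x i then 1 else 0) + (if y i then 1 else 0) - 1)) - k)
               - max 0 ((∑ i, max 0 ((if x i then 1 else 0) + (if y i then 1 else 0) - 1))
                   - (k + 1)))) ∧
    ∃ N : Net (d + d) 1, N.depth = 3 ∧ N.size ≤ 3 * d + 1 ∧
      ∀ x y : Fin d → Bool,
        N.eval relu (Fin.append (fun i => if x i then 1 else 0)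
          (fun i => if y i then 1 else 0)) 0 = (IPn d x y : ℝ) := by
  -- common facts
  have hmd : ∀ x y : Fin d → Bool,
      (∑ i, (if x i && y i then 1 else 0) : ℕ) ≤ d := by
    intro x y
    calc (∑ i, (if x i && y i then 1 else 0) : ℕ)
        ≤ ∑ _i : Fin d, 1 := Finset.sum_le_sum (fun i _ => by split <;> omega)
      _ = d := by simp
  have hip : ∀ x y : Fin d → Bool,
      IPn d x y = (∑ i, (if x i && y i then 1 else 0) : ℕ) % 2 := by
    intro x y
    unfold IPn
    congr 1
    exact Finset.sum_congr rfl fun i _ => by cases x i <;> cases y i <;> simp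
  have hs : ∀ x y : Fin d → Bool,
      (∑ i, max 0 ((if x i then (1:ℝ) else 0) + (if y i then 1 else 0) - 1))
        = ((∑ i, (if x i && y i then 1 else 0) : ℕ) : ℝ) := by
    intro x y
    push_cast
    exact Finset.sum_congr rfl fun i _ => ind_eq (x i) (y i)
  constructor
  · intro x y
    have hS' : (∑ i : Fin d, ((if x i then 1 else 0) + (if y i then 1 else 0) - 1) : ℕ)
        = ∑ i, (if x i && y i then 1 else 0) :=
      Finset.sum_congr rfl fun i _ => by cases x i <;> cases y i <;> simp
    simp only [Nat.zero_max, castsub, hS', Nat.cast_add, Nat.cast_one]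
    rw [hip x y, core d _ (hmd x y)]
  · refine ⟨theNet d, rfl, ?_, ?_⟩
    · simp only [theNet, Net.size]
      omega
    · intro x y
      set m : ℕ := ∑ i, (if x i && y i then 1 else 0) with hm
      simp only [theNet, Net.eval, one_mul]
      have hstep1 : ∀ i : Fin d,
          relu ((∑ j, netA1 d i j *
              Fin.append (fun i => if x i then (1:ℝ) else 0)
                (fun i => if y i then (1:ℝ) else 0) j) + (-1))
            = if x i && y i then (1:ℝ) else 0 := by
        intro i
        have hsum : (∑ j, netA1 d i j *
            Fin.append (fun i => if x i then (1:ℝ) else 0)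
              (fun i => if y i then (1:ℝ) else 0) j)
            = (if x i then (1:ℝ) else 0) + (if y i then 1 else 0) := by
          have e1 : ∀ f : Fin d → ℝ, (∑ j, (if j = i then (1:ℝ) else 0) * f j) = f i := by
            intro f
            simp only [ite_mul, one_mul, zero_mul, Finset.sum_ite_eq',
              Finset.mem_univ, ite_true]
          rw [Fin.sum_univ_add]
          simp only [netA1, Fin.append_left, Fin.append_right]
          rw [e1, e1]
        rw [hsum, relu, ← sub_eq_add_neg]
        exact ind_eq (x i) (y i)
      simp only [hstep1]
      have hsum2 : (∑ i : Fin d, (if x i && y i then (1:ℝ) else 0)) = (m:ℝ) := by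
        rw [hm]; push_cast; rfl
      simp only [hsum2]
      rw [Fin.sum_univ_add]
      simp only [netC, netB2, Fin.append_left, Fin.append_right, relu, add_zero]
      rw [hip x y, ← hm, core d m (hmd x y), final_sums d m]
end
end
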